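/- Suppose F : ℝ × ℝ → ℝ is continuous and F(x,y) = g(x+y) - g(x) - g(y) for some (arbitrarily behaved) function g : ℝ → ℝ. Then there exists a continuous function f : ℝ → ℝ such that F(x,y) = f(x+y) - f(x) - f(y) for all real x, y. -/

import Mathlib

open intervalIntegral MeasureTheory

theorem continuous_inhomCauchy_representation (F : ℝ × ℝ → ℝ) (g : ℝ → ℝ)
    (hFcont : Continuous F)
    (hFg : ∀ x y : ℝ, F (x, y) = g (x + y) - g x - g y) :
    ∃ f : ℝ → ℝ, Continuous f ∧
      ∀ x y : ℝ, F (x, y) = f (x + y) - f x - f y := by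
  set P : ℝ → ℝ := fun t => ∫ s in (0:ℝ)..t, F (1, s) with hP
  set Q : ℝ → ℝ := fun t => ∫ s in (0:ℝ)..1, F (t, s) with hQ
  have hint : ∀ (h : ℝ → ℝ), Continuous h → ∀ a b : ℝ, IntervalIntegrable h volume a b :=
    fun h hh a b => hh.intervalIntegrable a b
  have hcP : Continuous P := by
    have := intervalIntegral.continuous_parametric_intervalIntegral_of_continuous
      (μ := MeasureTheory.volume) (a₀ := (0:ℝ)) (f := fun (x : ℝ) (t : ℝ) => F (1, t))
      (by fun_prop) (s := fun x : ℝ => x) continuous_id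
    simpa using this
  have hcQ : Continuous Q := by
    exact intervalIntegral.continuous_parametric_intervalIntegral_of_continuous'
      (μ := MeasureTheory.volume) (f := fun (x : ℝ) (t : ℝ) => F (x, t))
      (by fun_prop) 0 1
  refine ⟨fun t => P t - Q t, hcP.sub hcQ, fun x y => ?_⟩
  have hFc : ∀ a : ℝ, Continuous fun s => F (a, s) := fun a => by fun_prop
  -- Step A: P (x+y) - P x - P y
  have hA : P (x + y) - P x - P y
      = (∫ s in (1:ℝ)..(y+1), F (x, s)) - ∫ s in (0:ℝ)..y, F (x, s) := by
    have h1 : P (x + y) = P x + ∫ s in x..(x+y), F (1, s) :=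
      (integral_add_adjacent_intervals (hint _ (hFc 1) 0 x) (hint _ (hFc 1) x (x+y))).symm
    have h2 : (∫ s in x..(x+y), F (1, s)) = ∫ s in (0:ℝ)..y, F (1, x + s) := by
      rw [integral_comp_add_left (fun s => F (1, s)) x]
      norm_num [add_comm]
    have h3 : ∀ s : ℝ, F (1, x + s) - F (1, s) = F (x, s + 1) - F (x, s) := by
      intro s
      simp only [hFg]
      ring_nf
    have h4 : (∫ s in (0:ℝ)..y, F (x, s + 1)) = ∫ s in (1:ℝ)..(y+1), F (x, s) := by
      have := integral_comp_add_right (a := (0:ℝ)) (b := y) (fun s => F (x, s)) 1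
      simpa using this
    calc P (x + y) - P x - P y
        = (∫ s in (0:ℝ)..y, F (1, x + s)) - ∫ s in (0:ℝ)..y, F (1, s) := by
          rw [h1, h2]; simp only [hP]; ring
      _ = ∫ s in (0:ℝ)..y, (F (1, x + s) - F (1, s)) := by
          rw [integral_sub (hint _ (by fun_prop) 0 y) (hint _ (hFc 1) 0 y)]
      _ = ∫ s in (0:ℝ)..y, (F (x, s + 1) - F (x, s)) := by
          simp only [h3]
      _ = (∫ s in (1:ℝ)..(y+1), F (x, s)) - ∫ s in (0:ℝ)..y, F (x, s) := by
          rw [integral_sub (hint _ (by fun_prop) 0 y) (hint _ (hFc x) 0 y), h4]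
  -- Step C: Q (x+y) - Q x - Q y
  have hC : Q (x + y) - Q x - Q y
      = (∫ s in y..(y+1), F (x, s)) - (∫ s in (0:ℝ)..1, F (x, s)) - F (x, y) := by
    have h5 : ∀ s : ℝ, F (x + y, s) - F (x, s) - F (y, s) = F (x, y + s) - F (x, s) - F (x, y) := by
      intro s
      simp only [hFg]
      ring_nf
    have h6 : (∫ s in (0:ℝ)..1, F (x, y + s)) = ∫ s in y..(y+1), F (x, s) := by
      have := integral_comp_add_left (a := (0:ℝ)) (b := 1) (fun s => F (x, s)) y
      simpa using this
    calc Q (x + y) - Q x - Q y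
        = ∫ s in (0:ℝ)..1, (F (x + y, s) - F (x, s) - F (y, s)) := by
          rw [integral_sub (hint (fun s => F (x + y, s) - F (x, s)) ((hFc (x+y)).sub (hFc x)) 0 1)
              ((hFc y).intervalIntegrable 0 1),
            integral_sub ((hFc (x+y)).intervalIntegrable 0 1) ((hFc x).intervalIntegrable 0 1)]
      _ = ∫ s in (0:ℝ)..1, (F (x, y + s) - F (x, s) - F (x, y)) := by
          simp only [h5]
      _ = (∫ s in y..(y+1), F (x, s)) - (∫ s in (0:ℝ)..1, F (x, s)) - F (x, y) := by
          rw [integral_sub (hint (fun s => F (x, y + s) - F (x, s)) ((by fun_prop : Continuous fun s => F (x, y + s)).sub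
              (hFc x)) 0 1) (intervalIntegrable_const),
            integral_sub ((by fun_prop : Continuous fun s => F (x, y + s)).intervalIntegrable 0 1)
              ((hFc x).intervalIntegrable 0 1), h6]
          simp
  -- combine
  have hadj : (∫ s in (0:ℝ)..y, F (x, s)) + (∫ s in y..(y+1), F (x, s))
      = (∫ s in (0:ℝ)..1, F (x, s)) + (∫ s in (1:ℝ)..(y+1), F (x, s)) := by
    rw [integral_add_adjacent_intervals (hint _ (hFc x) 0 y) (hint _ (hFc x) y (y+1)),
      integral_add_adjacent_intervals (hint _ (hFc x) 0 1) (hint _ (hFc x) 1 (y+1))]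
  have : (P (x+y) - Q (x+y)) - (P x - Q x) - (P y - Q y)
      = (P (x+y) - P x - P y) - (Q (x+y) - Q x - Q y) := by ring
  rw [this, hA, hC]
  linarith [hadj]
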